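/- Let G be a P-group and B ⊆ G a symmetric subset. A function f : B → ℝ is uniformly continuous with respect to the trace of the left uniformity of G on B if and only if there exists an open subgroup H of G such that f is constant on B ∩ xH for every x ∈ B. -/

import Mathlib

open Filter Set Topology Pointwise

universe u v

/-- A P-space: countable intersections of open sets are open. -/
def IsPSpace (X : Type*) [TopologicalSpace X] : Prop :=
  ∀ s : ℕ → Set X, (∀ n, IsOpen (s n)) → IsOpen (⋂ n, s n)

/-- A uniform P-space: countable intersections of entourages are entourages. -/
def IsUniformPSpace (X : Type*) [UniformSpace X] : Prop :=
  ∀ s : ℕ → Set (X × X), (∀ n, s n ∈ uniformity X) → (⋂ n, s n) ∈ uniformity X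

/-- The left uniformity of a topological group, as a filter on `G × G`. -/
def leftUnif (G : Type*) [Group G] [TopologicalSpace G] : Filter (G × G) :=
  Filter.comap (fun p : G × G => p.1⁻¹ * p.2) (nhds 1)

/-- The right uniformity of a topological group, as a filter on `G × G`. -/
def rightUnif (G : Type*) [Group G] [TopologicalSpace G] : Filter (G × G) :=
  Filter.comap (fun p : G × G => p.1 * p.2⁻¹) (nhds 1)

/-- The two-sided uniformity (supremum of left and right uniformities). -/
def twoSidedUnif (G : Type*) [Group G] [TopologicalSpace G] : Filter (G × G) :=
  leftUnif G ⊓ rightUnif G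

/-- `ε` belongs to the trace of the filter `μ` on the subset `B`. -/
def MemTrace {G : Type*} (μ : Filter (G × G)) (B : Set G) (ε : Set (G × G)) : Prop :=
  ∃ δ ∈ μ, δ ∩ B ×ˢ B = ε ∩ B ×ˢ B

/-- `f : B → ℝ` is uniformly continuous for the trace on `B` of the filter `μ` on `G × G`. -/
def UCOn {G : Type*} (μ : Filter (G × G)) (B : Set G) (f : B → ℝ) : Prop :=
  ∀ e : ℝ, 0 < e → ∃ δ ∈ μ, ∀ x y : B, ((x : G), (y : G)) ∈ δ → |f x - f y| < e

/-- `ε` is an equivalence relation on the subset `B`. -/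
def IsEquivOn {G : Type*} (B : Set G) (ε : Set (G × G)) : Prop :=
  (∀ x ∈ B, (x, x) ∈ ε) ∧ (∀ x ∈ B, ∀ y ∈ B, (x, y) ∈ ε → (y, x) ∈ ε) ∧
    (∀ x ∈ B, ∀ y ∈ B, ∀ z ∈ B, (x, y) ∈ ε → (y, z) ∈ ε → (x, z) ∈ ε)

/-- The relation `ε` has at most `c` equivalence classes on `B`. -/
def ClassesLE {G : Type*} (B : Set G) (ε : Set (G × G)) (c : Cardinal) : Prop :=
  Cardinal.mk ↥(Set.range fun x : B => {y : B | ((x : G), (y : G)) ∈ ε}) ≤ c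

/-- The symmetric subset `B` of a topological group `G` is functionally balanced. -/
def FunBalancedOn (G : Type*) [Group G] [TopologicalSpace G] (B : Set G) : Prop :=
  ∀ f : B → ℝ, (∃ M : ℝ, ∀ x : B, |f x| ≤ M) →
    UCOn (leftUnif G) B f → UCOn (rightUnif G) B f

/-- The symmetric subset `B` of a topological group `G` is strongly functionally balanced. -/
def StronglyFunBalancedOn (G : Type*) [Group G] [TopologicalSpace G] (B : Set G) : Prop :=
  ∀ f : B → ℝ, UCOn (leftUnif G) B f → UCOn (rightUnif G) B f

/-- A non-archimedean topological group: open subgroups form a base at the identity. -/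
def IsNonArchGroup (G : Type*) [Group G] [TopologicalSpace G] : Prop :=
  ∀ U ∈ nhds (1 : G), ∃ H : Subgroup G, IsOpen (H : Set G) ∧ (H : Set G) ⊆ U

/-- Words of length at most `n` in the free group. -/
def Bword (X : Type*) [DecidableEq X] (n : ℕ) : Set (FreeGroup X) :=
  {w : FreeGroup X | w.toWord.length ≤ n}

/-- The given group topology on `FreeGroup X` makes it the uniform free topological group
over the uniform space `X`: the canonical map is uniformly continuous (for the two-sided
uniformity) and every uniformly continuous map to a topological group extends to a
continuous homomorphism. -/
def IsUniformFreeTopGroup (X : Type u) [UniformSpace X] [TopologicalSpace (FreeGroup X)]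
    [IsTopologicalGroup (FreeGroup X)] : Prop :=
  Filter.Tendsto (Prod.map (FreeGroup.of : X → FreeGroup X) FreeGroup.of) (uniformity X)
      (twoSidedUnif (FreeGroup X)) ∧
    ∀ (G : Type u) [Group G] [TopologicalSpace G] [IsTopologicalGroup G] (φ : X → G),
      Filter.Tendsto (Prod.map φ φ) (uniformity X) (twoSidedUnif G) →
        Continuous ⇑(FreeGroup.lift φ)

/-- The given group topology on `FreeGroup X` makes it the free non-archimedean balanced
topological group over the uniform space `X`. -/
def IsFreeNABalancedGroup (X : Type u) [UniformSpace X] [TopologicalSpace (FreeGroup X)]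
    [IsTopologicalGroup (FreeGroup X)] : Prop :=
  IsNonArchGroup (FreeGroup X) ∧ leftUnif (FreeGroup X) = rightUnif (FreeGroup X) ∧
    Filter.Tendsto (Prod.map (FreeGroup.of : X → FreeGroup X) FreeGroup.of) (uniformity X)
      (twoSidedUnif (FreeGroup X)) ∧
    ∀ (G : Type u) [Group G] [TopologicalSpace G] [IsTopologicalGroup G] (φ : X → G),
      IsNonArchGroup G → leftUnif G = rightUnif G →
      Filter.Tendsto (Prod.map φ φ) (uniformity X) (twoSidedUnif G) →
        Continuous ⇑(FreeGroup.lift φ)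

lemma step_aux (G : Type*) [Group G] [TopologicalSpace G] [IsTopologicalGroup G]
    {W : Set G} (hW : W ∈ 𝓝 (1 : G)) :
    ∃ V : Set G, IsOpen V ∧ (1 : G) ∈ V ∧ V⁻¹ = V ∧ V * V ⊆ W := by
  obtain ⟨V, hVo, hV1, hVV⟩ := exists_open_nhds_one_mul_subset hW
  refine ⟨V ∩ V⁻¹, hVo.inter (hVo.preimage continuous_inv), ⟨hV1, by simpa⟩, ?_, ?_⟩
  · ext a; simp [and_comm]
  · exact (Set.mul_subset_mul Set.inter_subset_left Set.inter_subset_left).trans hVV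

lemma pspace_nonarch (G : Type*) [Group G] [TopologicalSpace G] [IsTopologicalGroup G]
    (hP : IsPSpace G) : IsNonArchGroup G := by
  intro U hU
  obtain ⟨V0, hV0o, hV01, hV0s, hV0m⟩ := step_aux G hU
  have hV0U : V0 ⊆ U := fun v hv => by simpa using hV0m (Set.mul_mem_mul hv hV01)
  have exN : ∀ t : {V : Set G // IsOpen V ∧ (1 : G) ∈ V},
      ∃ s : {V : Set G // IsOpen V ∧ (1 : G) ∈ V},
        (s : Set G)⁻¹ = s ∧ (s : Set G) * s ⊆ t := by
    rintro ⟨W, hWo, hW1⟩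
    obtain ⟨V, h1, h2, h3, h4⟩ := step_aux G (hWo.mem_nhds hW1)
    exact ⟨⟨V, h1, h2⟩, h3, h4⟩
  choose next hnsym hnmul using exN
  let seq : ℕ → {V : Set G // IsOpen V ∧ (1 : G) ∈ V} := fun n => next^[n] ⟨V0, hV0o, hV01⟩
  have hseq : ∀ n, seq (n + 1) = next (seq n) := fun n =>
    Function.iterate_succ_apply' next n _
  have hseq0 : seq 0 = ⟨V0, hV0o, hV01⟩ := rfl
  have hsym : ∀ n, ((seq n : Set G))⁻¹ = seq n := by
    intro n
    cases n with
    | zero => exact hV0s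
    | succ m => rw [hseq m]; exact hnsym (seq m)
  have hWopen : IsOpen (⋂ n, (seq n : Set G)) := hP _ fun n => (seq n).2.1
  refine ⟨{ carrier := ⋂ n, (seq n : Set G)
            one_mem' := Set.mem_iInter.2 fun n => (seq n).2.2
            mul_mem' := ?_
            inv_mem' := ?_ }, hWopen, ?_⟩
  · intro a b ha hb
    refine Set.mem_iInter.2 fun n => ?_
    have ha' : a ∈ (next (seq n) : Set G) := by
      rw [← hseq n]; exact Set.mem_iInter.1 ha (n + 1)
    have hb' : b ∈ (next (seq n) : Set G) := by
      rw [← hseq n]; exact Set.mem_iInter.1 hb (n + 1)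
    exact hnmul (seq n) (Set.mul_mem_mul ha' hb')
  · intro a ha
    refine Set.mem_iInter.2 fun n => ?_
    rw [← hsym n]
    exact Set.inv_mem_inv.2 (Set.mem_iInter.1 ha n)
  · exact (Set.iInter_subset _ 0).trans (hseq0 ▸ hV0U)

/-- for a symmetric subset `B` of a P-group `G`, a function `f : B → ℝ` is
left-trace uniformly continuous iff it is constant on `B ∩ xH` for some open subgroup `H`. -/
theorem pGroup_luc_iff (G : Type*) [Group G] [TopologicalSpace G] [IsTopologicalGroup G]
    (hP : IsPSpace G) (B : Set G) (hB : B⁻¹ = B) (f : B → ℝ) :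
    UCOn (leftUnif G) B f ↔
      ∃ H : Subgroup G, IsOpen (H : Set G) ∧
        ∀ x y z : B, (y : G) ∈ (x : G) • (H : Set G) → (z : G) ∈ (x : G) • (H : Set G) →
          f y = f z := by
  constructor
  · intro hf
    have h' : ∀ n : ℕ, ∃ δ ∈ leftUnif G, ∀ x y : B, ((x : G), (y : G)) ∈ δ →
        |f x - f y| < 1 / (n + 1) := fun n => hf _ (by positivity)
    choose δ hδ hδf using h'
    have hU : ∀ n, ∃ U ∈ 𝓝 (1 : G), (fun p : G × G => p.1⁻¹ * p.2) ⁻¹' U ⊆ δ n := by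
      intro n
      exact (Filter.mem_comap.1 (hδ n))
    choose U hUnhds hUsub using hU
    have hH : ∀ n, ∃ H : Subgroup G, IsOpen (H : Set G) ∧ (H : Set G) ⊆ U n :=
      fun n => pspace_nonarch G hP (U n) (hUnhds n)
    choose Hn hHno hHnsub using hH
    refine ⟨⨅ n, Hn n, ?_, ?_⟩
    · have : ((⨅ n, Hn n : Subgroup G) : Set G) = ⋂ n, (Hn n : Set G) := by
        simp [Subgroup.coe_iInf]
      rw [this]
      exact hP _ fun n => hHno n
    · intro x y z hy hz
      rw [Set.mem_smul_set_iff_inv_smul_mem] at hy hz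
      have hyz : (y : G)⁻¹ * (z : G) ∈ (⨅ n, Hn n : Subgroup G) := by
        have : (y : G)⁻¹ * (z : G) = ((x : G)⁻¹ • (y : G))⁻¹ * ((x : G)⁻¹ • (z : G)) := by
          simp [smul_eq_mul, mul_assoc]
        rw [this]
        exact Subgroup.mul_mem _ (Subgroup.inv_mem _ hy) hz
      by_contra hne
      have hpos : 0 < |f y - f z| := by
        rw [abs_pos]; exact sub_ne_zero_of_ne hne
      obtain ⟨n, hn⟩ := exists_nat_one_div_lt hpos
      have hmem : (y : G)⁻¹ * (z : G) ∈ Hn n := (Subgroup.mem_iInf.1 hyz) n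
      have : ((y : G), (z : G)) ∈ δ n := hUsub n (hHnsub n hmem)
      exact absurd (hδf n y z this) (not_lt.2 (le_of_lt (by exact_mod_cast hn)))
  · rintro ⟨H, hHo, hHc⟩ e he
    refine ⟨(fun p : G × G => p.1⁻¹ * p.2) ⁻¹' (H : Set G),
      Filter.preimage_mem_comap (hHo.mem_nhds H.one_mem), ?_⟩
    intro x y hxy
    have hx : (x : G) ∈ (x : G) • (H : Set G) := by
      rw [Set.mem_smul_set_iff_inv_smul_mem]; simp [smul_eq_mul, H.one_mem]
    have hy : (y : G) ∈ (x : G) • (H : Set G) := by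
      rw [Set.mem_smul_set_iff_inv_smul_mem]; exact hxy
    rw [hHc x x y hx hy]
    simpa using he
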